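/- In the ring of formal power series in x,y with coefficients in ℚ[t], the series A(t,x,y) := Σ_{n≥1} Σ_{d,j} A(n,d,j) t^d x^n y^j/((j−1)!(n−j)!) satisfies A(t,x,y) · ( t·1 − e^{(t−1)x(1+y)} ) = (t−1) · x y · e^{(t−1)xy}. -/

import Mathlib

/-- The word `π₁π₂⋯πₙ` of a permutation of `[n] = {1, …, n}`. -/
def permWord (n : ℕ) (π : Equiv.Perm (Fin n)) : ℕ → ℕ :=
  fun i => if h : i < n then (π ⟨i, h⟩ : ℕ) + 1 else 0

/-- The number of descents of a permutation of `[n]`. -/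
def desNum (n : ℕ) (π : Equiv.Perm (Fin n)) : ℕ :=
  ((Finset.range (n - 1)).filter (fun i => permWord n π (i + 1) < permWord n π i)).card

/-- `A(n,d,j)`: the number of permutations of `[n]` with `d` descents and first
letter `j`; by convention `0` unless `n ≥ 1`, `0 ≤ d ≤ n-1` and `1 ≤ j ≤ n`. -/
noncomputable def eulerianFirst (n d j : ℤ) : ℕ :=
  if 1 ≤ n ∧ 0 ≤ d ∧ 1 ≤ j then
    Nat.card {π : Equiv.Perm (Fin n.toNat) //
      desNum n.toNat π = d.toNat ∧ permWord n.toNat π 0 = j.toNat}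
  else 0

/-- Formal power series in commuting variables `x` (index 0) and `y` (index 1)
with coefficients in `ℚ[t]`. -/
abbrev PS2 : Type := MvPowerSeries (Fin 2) (Polynomial ℚ)

/-- `e^{c·x(1+y)}`: the series whose coefficient of `x^n y^j` is `c^n·binom(n,j)/n!`. -/
noncomputable def expX1Y (c : Polynomial ℚ) : PS2 := fun e =>
  ((e 0).factorial : ℚ)⁻¹ • (c ^ (e 0) * ((e 0).choose (e 1) : Polynomial ℚ))

/-- `e^{c·xy}`: the series whose coefficient of `x^k y^k` is `c^k/k!`
(all other coefficients `0`). -/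
noncomputable def expXY (c : Polynomial ℚ) : PS2 := fun e =>
  if e 0 = e 1 then ((e 0).factorial : ℚ)⁻¹ • c ^ (e 0) else 0

/-- `A(t,x,y) = Σ_{n≥1} Σ_{d,j} A(n,d,j) t^d x^n y^j/((j-1)!(n-j)!)`. -/
noncomputable def AGF : PS2 := fun e =>
  (((e 1 - 1).factorial * (e 0 - e 1).factorial : ℕ) : ℚ)⁻¹ •
    ∑ d ∈ Finset.range (e 0 + 1),
      (eulerianFirst (e 0) d (e 1) : Polynomial ℚ) * Polynomial.X ^ d

section AuxProof

open Finset Polynomial Equiv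

section Comb

variable {m : ℕ}

/-- Insert `p` at the front: the permutation with word `p+1` followed by the
word of `σ` with values shifted to skip `p`. -/
def insPerm (p : Fin (m+1)) (σ : Equiv.Perm (Fin m)) : Equiv.Perm (Fin (m+1)) :=
  (finSuccEquiv' 0).trans ((σ.optionCongr).trans (finSuccEquiv' p).symm)

@[simp] lemma insPerm_zero (p : Fin (m+1)) (σ : Equiv.Perm (Fin m)) :
    insPerm p σ 0 = p := by
  simp [insPerm, finSuccEquiv'_at]

@[simp] lemma insPerm_succ (p : Fin (m+1)) (σ : Equiv.Perm (Fin m)) (i : Fin m) :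
    insPerm p σ i.succ = p.succAbove (σ i) := by
  have h : (finSuccEquiv' (0 : Fin (m+1))) i.succ = some i := by
    rw [← Fin.zero_succAbove, finSuccEquiv'_succAbove]
  simp [insPerm, h]

lemma insPerm_bijective :
    Function.Bijective (fun q : Fin (m+1) × Equiv.Perm (Fin m) => insPerm q.1 q.2) := by
  rw [Fintype.bijective_iff_injective_and_card]
  constructor
  · rintro ⟨p, σ⟩ ⟨q, τ⟩ h
    simp only at h
    have hp : p = q := by
      have := congrArg (fun π : Equiv.Perm (Fin (m+1)) => π 0) h
      simpa using this
    subst hp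
    have hσ : σ = τ := by
      ext i
      have := congrArg (fun π : Equiv.Perm (Fin (m+1)) => π i.succ) h
      simp only [insPerm_succ] at this
      exact congrArg Fin.val (Fin.succAbove_right_injective this)
    simp [hσ]
  · simp [Fintype.card_perm, Fintype.card_prod, Nat.factorial_succ]

end Comb

variable {nn : ℕ}

lemma permWord_lt_iff (π : Equiv.Perm (Fin nn)) {i j : ℕ} (hi : i < nn) (hj : j < nn) :
    (permWord nn π i < permWord nn π j) ↔ π ⟨i, hi⟩ < π ⟨j, hj⟩ := by
  unfold permWord
  rw [dif_pos hi, dif_pos hj, Fin.lt_def]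
  omega

lemma desNum_eq_sum (π : Equiv.Perm (Fin nn)) :
    desNum nn π = ∑ i ∈ Finset.range (nn-1),
      if permWord nn π (i+1) < permWord nn π i then 1 else 0 := by
  rw [desNum, Finset.card_filter]

lemma desNum_insPerm {k : ℕ} (p : Fin (k+2)) (σ : Equiv.Perm (Fin (k+1))) :
    desNum (k+2) (insPerm p σ) = desNum (k+1) σ + (if (σ 0 : ℕ) < (p : ℕ) then 1 else 0) := by
  rw [desNum_eq_sum, desNum_eq_sum]
  have hone : (⟨1, by omega⟩ : Fin (k+2)) = (0 : Fin (k+1)).succ := rfl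
  have h0 : (if permWord (k+2) (insPerm p σ) 1 < permWord (k+2) (insPerm p σ) 0 then 1 else 0)
      = (if (σ 0 : ℕ) < (p : ℕ) then 1 else 0) := by
    refine if_congr ?_ rfl rfl
    rw [permWord_lt_iff (insPerm p σ) (by omega) (by omega)]
    have h1 : (⟨0, by omega⟩ : Fin (k+2)) = 0 := rfl
    rw [h1, hone, insPerm_zero, insPerm_succ]
    rw [Fin.succAbove_lt_iff_castSucc_lt]
    simp [Fin.lt_def]
  have hstep : ∀ i ∈ Finset.range k,
      (if permWord (k+2) (insPerm p σ) (i+1+1) < permWord (k+2) (insPerm p σ) (i+1) then (1:ℕ) else 0)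
      = (if permWord (k+1) σ (i+1) < permWord (k+1) σ i then 1 else 0) := by
    intro i hi
    rw [Finset.mem_range] at hi
    refine if_congr ?_ rfl rfl
    rw [permWord_lt_iff (insPerm p σ) (by omega) (by omega),
        permWord_lt_iff σ (by omega) (by omega)]
    have e1 : (⟨i+1+1, by omega⟩ : Fin (k+2)) = (⟨i+1, by omega⟩ : Fin (k+1)).succ := rfl
    have e2 : (⟨i+1, by omega⟩ : Fin (k+2)) = (⟨i, by omega⟩ : Fin (k+1)).succ := rfl
    rw [e1, e2, insPerm_succ, insPerm_succ, Fin.succAbove_lt_succAbove_iff]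
  show (∑ i ∈ Finset.range (k+1), _) = _
  rw [Finset.sum_range_succ' _ k, h0, Finset.sum_congr rfl hstep,
    Nat.add_sub_cancel]

noncomputable def EP (m : ℕ) : Polynomial ℚ := ∑ σ : Equiv.Perm (Fin m), X ^ desNum m σ

noncomputable def fP (n j : ℕ) : Polynomial ℚ :=
  ∑ π : Equiv.Perm (Fin n), if permWord n π 0 = j then X ^ desNum n π else 0

@[simp] lemma EP_zero : EP 0 = 1 := by
  rw [EP, Fintype.sum_subsingleton _ (Equiv.refl (Fin 0))]
  simp [desNum]
@[simp] lemma fP_one_one : fP 1 1 = 1 := by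
  rw [fP, Fintype.sum_subsingleton _ (Equiv.refl (Fin 1))]
  simp [desNum, permWord]

lemma permWord_zero {m : ℕ} (π : Equiv.Perm (Fin (m+1))) :
    permWord (m+1) π 0 = (π 0 : ℕ) + 1 := by
  unfold permWord
  rw [dif_pos (by omega)]
  rfl

lemma fP_delete {k j : ℕ} (hj1 : 1 ≤ j) (hj2 : j ≤ k + 2) :
    fP (k+2) j = ∑ σ : Equiv.Perm (Fin (k+1)),
      X ^ (desNum (k+1) σ + if permWord (k+1) σ 0 < j then 1 else 0) := by
  rw [fP, ← Fintype.sum_bijective _ insPerm_bijective _ _ (fun q => rfl),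
    Fintype.sum_prod_type]
  have key : ∀ p : Fin (k+2), ∀ σ : Equiv.Perm (Fin (k+1)),
      permWord (k+2) (insPerm p σ) 0 = (p : ℕ) + 1 := by
    intro p σ; rw [permWord_zero, insPerm_zero]
  rw [Finset.sum_eq_single (⟨j-1, by omega⟩ : Fin (k+2))]
  · apply Finset.sum_congr rfl
    intro σ _
    rw [key, if_pos (show (j-1) + 1 = j by omega), desNum_insPerm, permWord_zero]
    congr 1
    refine congrArg _ (if_congr ?_ rfl rfl)
    show (σ 0 : ℕ) < j - 1 ↔ (σ 0 : ℕ) + 1 < j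
    omega
  · intro p _ hp
    apply Finset.sum_eq_zero
    intro σ _
    rw [key, if_neg]
    intro h
    apply hp
    apply Fin.ext
    simp only [Fin.val_mk]
    simp only at h
    omega
  · simp

lemma fP_first (m : ℕ) : fP (m+1) 1 = EP m := by
  cases m with
  | zero => simp
  | succ k =>
    rw [fP_delete le_rfl (by omega), EP]
    apply Finset.sum_congr rfl
    intro σ _
    rw [permWord_zero, if_neg (by omega), Nat.add_zero]

lemma fP_diff {k j : ℕ} (hj1 : 1 ≤ j) (hj2 : j ≤ k + 1) :
    fP (k+2) (j+1) = fP (k+2) j + (X - 1) * fP (k+1) j := by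
  rw [fP_delete (by omega) (by omega), fP_delete hj1 (by omega), fP, Finset.mul_sum,
    ← Finset.sum_add_distrib]
  apply Finset.sum_congr rfl
  intro σ _
  rcases lt_trichotomy (permWord (k+1) σ 0) j with h | h | h
  · rw [if_pos (by omega), if_pos h, if_neg (by omega), mul_zero, add_zero]
  · rw [if_pos (by omega), if_neg (by omega), if_pos h]
    ring
  · rw [if_neg (by omega), if_neg (by omega), if_neg (by omega)]
    simp

lemma fP_closed : ∀ j, 1 ≤ j → ∀ n, j ≤ n →
    fP n j = ∑ i ∈ Finset.range j,
      (((j-1).choose i : ℕ) : Polynomial ℚ) * ((X - 1)^i * EP (n-1-i)) := by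
  intro j hj
  induction j, hj using Nat.le_induction with
  | base =>
    intro n hn
    obtain ⟨m, rfl⟩ : ∃ m, n = m+1 := ⟨n-1, by omega⟩
    rw [Finset.sum_range_one, fP_first]
    simp
  | succ j hj ih =>
    intro n hn
    obtain ⟨r, rfl⟩ : ∃ r, j = r+1 := ⟨j-1, by omega⟩
    obtain ⟨k, rfl⟩ : ∃ k, n = k+2 := ⟨n-2, by omega⟩
    rw [fP_diff (by omega) (by omega), ih (k+2) (by omega), ih (k+1) (by omega)]
    have e1 : r+1+1-1 = r+1 := rfl
    have e2 : r+1-1 = r := rfl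
    simp only [e1, e2]
    rw [Finset.sum_range_succ' _ (r+1)]
    have hP : ∀ i ∈ Finset.range (r+1),
        (((r+1).choose (i+1) : ℕ) : Polynomial ℚ) * ((X-1)^(i+1) * EP (k+2-1-(i+1)))
        = (X-1) * ((((r).choose i : ℕ) : Polynomial ℚ) * ((X-1)^i * EP ((k+1)-1-i)))
          + (((r).choose (i+1) : ℕ) : Polynomial ℚ) * ((X-1)^(i+1) * EP ((k+2)-1-(i+1))) := by
      intro i _
      have h3 : (k+2)-1-(i+1) = (k+1)-1-i := by omega
      rw [h3, Nat.choose_succ_succ]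
      push_cast
      ring
    rw [Finset.sum_congr rfl hP, Finset.sum_add_distrib, ← Finset.mul_sum]
    have hL : (∑ i ∈ Finset.range (r+1),
        ((r.choose i : ℕ) : Polynomial ℚ) * ((X-1)^i * EP ((k+2)-1-i)))
        = (∑ i ∈ Finset.range (r+1),
          ((r.choose (i+1) : ℕ) : Polynomial ℚ) * ((X-1)^(i+1) * EP ((k+2)-1-(i+1))))
          + ((r.choose 0 : ℕ) : Polynomial ℚ) * ((X-1)^0 * EP ((k+2)-1-0)) := by
      rw [Finset.sum_range_succ' _ r, Finset.sum_range_succ]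
      have : ((r.choose (r+1) : ℕ) : Polynomial ℚ) = 0 := by
        rw [Nat.choose_succ_self]; simp
      rw [this, zero_mul, add_zero]
    rw [hL]
    simp only [Nat.choose_zero_right]
    ring

lemma EP_partition {m : ℕ} (hm : 1 ≤ m) : EP m = ∑ j ∈ Finset.Icc 1 m, fP m j := by
  obtain ⟨k, rfl⟩ : ∃ k, m = k+1 := ⟨m-1, by omega⟩
  unfold fP
  rw [Finset.sum_comm, EP]
  apply Finset.sum_congr rfl
  intro π _
  rw [Finset.sum_ite_eq (Finset.Icc 1 (k+1)) (permWord (k+1) π 0) (fun _ => X ^ desNum (k+1) π)]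
  rw [if_pos]
  rw [Finset.mem_Icc, permWord_zero]
  have := (π 0).isLt
  omega

lemma hockey {m : ℕ} (i : ℕ) (hm : 1 ≤ m) :
    ∑ t ∈ Finset.range m, t.choose i = m.choose (i+1) := by
  have h1 : m - 1 + 1 = m := by omega
  rw [← h1, ← Nat.sum_Icc_choose (m-1) i]
  apply (Finset.sum_subset ?_ ?_).symm
  · intro t ht
    rw [Finset.mem_Icc] at ht
    rw [Finset.mem_range]
    omega
  · intro t ht hnt
    rw [Finset.mem_range] at ht
    rw [Finset.mem_Icc] at hnt
    exact Nat.choose_eq_zero_of_lt (by omega)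

lemma EP_sum {m : ℕ} (hm : 1 ≤ m) :
    EP m = ∑ i ∈ Finset.range m,
      ((m.choose (i+1) : ℕ) : Polynomial ℚ) * ((X-1)^i * EP (m-1-i)) := by
  rw [EP_partition hm]
  have h2 : ∀ j ∈ Finset.Icc 1 m, fP m j = ∑ i ∈ Finset.range m,
      (((j-1).choose i : ℕ) : Polynomial ℚ) * ((X-1)^i * EP (m-1-i)) := by
    intro j hj
    rw [Finset.mem_Icc] at hj
    rw [fP_closed j hj.1 m hj.2]
    apply Finset.sum_subset
    · exact Finset.range_subset_range.2 hj.2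
    · intro i hi hni
      rw [Finset.mem_range] at hi hni
      rw [Nat.choose_eq_zero_of_lt (by omega)]
      simp
  rw [Finset.sum_congr rfl h2, Finset.sum_comm]
  apply Finset.sum_congr rfl
  intro i _
  rw [← Finset.sum_mul, ← Nat.cast_sum]
  congr 2
  have h3 : ∑ j ∈ Finset.Icc 1 m, (j-1).choose i = ∑ t ∈ Finset.range m, t.choose i := by
    apply Finset.sum_nbij' (fun j => j - 1) (fun t => t + 1)
    · intro j hj; rw [Finset.mem_Icc] at hj; rw [Finset.mem_range]; omega
    · intro t ht; rw [Finset.mem_range] at ht; rw [Finset.mem_Icc]; omega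
    · intro j hj; rw [Finset.mem_Icc] at hj; omega
    · intro t _; omega
    · intro j _; rfl
  rw [h3, hockey i hm]

lemma EP_rec {m : ℕ} (hm : 1 ≤ m) :
    X * EP m = ∑ s ∈ Finset.range (m+1),
      ((m.choose s : ℕ) : Polynomial ℚ) * ((X-1)^s * EP (m-s)) := by
  have key : X * EP m = (X - 1) * EP m + EP m := by ring
  rw [key]
  nth_rewrite 1 [EP_sum hm]
  rw [Finset.sum_range_succ' _ m, Finset.mul_sum]
  have h4 : ∀ i ∈ Finset.range m,
      (X-1) * (((m.choose (i+1) : ℕ) : Polynomial ℚ) * ((X-1)^i * EP (m-1-i)))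
      = ((m.choose (i+1) : ℕ) : Polynomial ℚ) * ((X-1)^(i+1) * EP (m-(i+1))) := by
    intro i _
    have : m - (i+1) = m - 1 - i := by omega
    rw [this]
    ring
  rw [Finset.sum_congr rfl h4]
  simp


section PSLayer

noncomputable def EG2 : PS2 := fun e =>
  ((e 0).factorial : ℚ)⁻¹ • ((((e 0).choose (e 1) : ℕ) : Polynomial ℚ) * EP (e 0))

noncomputable def fs (a b : ℕ) : Fin 2 →₀ ℕ := Finsupp.equivFunOnFinite.symm ![a, b]

@[simp] lemma fs_zero (a b : ℕ) : fs a b 0 = a := rfl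
@[simp] lemma fs_one (a b : ℕ) : fs a b 1 = b := rfl

lemma eq_fs (e : Fin 2 →₀ ℕ) : e = fs (e 0) (e 1) := by
  ext x
  fin_cases x
  · rfl
  · rfl

lemma fs_inj {a b c d : ℕ} (h : fs a b = fs c d) : a = c ∧ b = d := by
  constructor
  · have := congrArg (fun f : Fin 2 →₀ ℕ => f 0) h; simpa using this
  · have := congrArg (fun f : Fin 2 →₀ ℕ => f 1) h; simpa using this

lemma fs_eq_zero_iff (a b : ℕ) : fs a b = 0 ↔ a = 0 ∧ b = 0 := by
  constructor
  · intro h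
    exact fs_inj (by rw [h]; exact eq_fs 0)
  · rintro ⟨rfl, rfl⟩
    exact (eq_fs 0).symm

lemma coeff_mul_fs (φ ψ : PS2) (m r : ℕ) :
    MvPowerSeries.coeff (fs m r) (φ * ψ)
      = ∑ p ∈ Finset.HasAntidiagonal.antidiagonal m ×ˢ Finset.HasAntidiagonal.antidiagonal r,
          MvPowerSeries.coeff (fs p.1.1 p.2.1) φ *
            MvPowerSeries.coeff (fs p.1.2 p.2.2) ψ := by
  rw [MvPowerSeries.coeff_mul]
  refine Finset.sum_nbij' (fun q => ((q.1 0, q.2 0), (q.1 1, q.2 1)))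
    (fun p => (fs p.1.1 p.2.1, fs p.1.2 p.2.2)) ?_ ?_ ?_ ?_ ?_
  · intro q hq
    rw [Finset.HasAntidiagonal.mem_antidiagonal] at hq
    rw [Finset.mem_product, Finset.HasAntidiagonal.mem_antidiagonal, Finset.HasAntidiagonal.mem_antidiagonal]
    constructor
    · have := congrArg (fun f : Fin 2 →₀ ℕ => f 0) hq; simpa using this
    · have := congrArg (fun f : Fin 2 →₀ ℕ => f 1) hq; simpa using this
  · intro p hp
    rw [Finset.mem_product, Finset.HasAntidiagonal.mem_antidiagonal, Finset.HasAntidiagonal.mem_antidiagonal] at hp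
    rw [Finset.HasAntidiagonal.mem_antidiagonal]
    ext x
    fin_cases x
    · simpa using hp.1
    · simpa using hp.2
  · intro q hq
    exact Prod.ext (eq_fs q.1).symm (eq_fs q.2).symm
  · intro p hp
    rfl
  · intro q hq
    simp only
    rw [← eq_fs q.1, ← eq_fs q.2]

lemma natCast_mul_poly (n : ℕ) (p : Polynomial ℚ) :
    ((n : ℕ) : Polynomial ℚ) * p = (n : ℚ) • p := by
  rw [← nsmul_eq_mul, ← Nat.cast_smul_eq_nsmul ℚ]

lemma factorial_inv_mul_choose {m s : ℕ} (hs : s ≤ m) :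
    ((m.factorial : ℚ))⁻¹ * (m.choose s : ℚ)
      = ((s.factorial : ℚ))⁻¹ * (((m - s).factorial : ℚ))⁻¹ := by
  have h := Nat.choose_mul_factorial_mul_factorial hs
  have h2 : ((m.choose s : ℚ)) * s.factorial * (m-s).factorial = m.factorial := by
    exact_mod_cast congrArg (Nat.cast : ℕ → ℚ) h
  have f1 : (m.factorial : ℚ) ≠ 0 := Nat.cast_ne_zero.2 m.factorial_ne_zero
  have f2 : (s.factorial : ℚ) ≠ 0 := Nat.cast_ne_zero.2 s.factorial_ne_zero
  have f3 : ((m-s).factorial : ℚ) ≠ 0 := Nat.cast_ne_zero.2 (m-s).factorial_ne_zero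
  field_simp
  linear_combination h2

lemma idA : EG2 * (MvPowerSeries.C (σ := Fin 2) (R := Polynomial ℚ) X * 1 - expX1Y (X - 1))
    = MvPowerSeries.C (σ := Fin 2) (R := Polynomial ℚ) (X - 1) := by
  apply MvPowerSeries.ext
  intro e
  obtain ⟨m, r, rfl⟩ : ∃ m r, e = fs m r := ⟨e 0, e 1, eq_fs e⟩
  rw [mul_one, mul_sub, map_sub, MvPowerSeries.coeff_mul_C, MvPowerSeries.coeff_C,
    coeff_mul_fs, Finset.sum_product]
  have hEG : ∀ a c : ℕ, MvPowerSeries.coeff (fs a c) EG2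
      = ((a.factorial : ℚ))⁻¹ • ((((a.choose c : ℕ)) : Polynomial ℚ) * EP a) :=
    fun a c => rfl
  have hEX : ∀ b d : ℕ, MvPowerSeries.coeff (fs b d) (expX1Y (X-1))
      = ((b.factorial : ℚ))⁻¹ • ((X-1) ^ b * (((b.choose d : ℕ)) : Polynomial ℚ)) :=
    fun b d => rfl
  have inner : ∀ ab ∈ Finset.HasAntidiagonal.antidiagonal m,
      (∑ cd ∈ Finset.HasAntidiagonal.antidiagonal r,
        MvPowerSeries.coeff (fs ab.1 cd.1) EG2 *
          MvPowerSeries.coeff (fs ab.2 cd.2) (expX1Y (X-1)))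
      = (ab.1.factorial : ℚ)⁻¹ • ((ab.2.factorial : ℚ)⁻¹ •
          ((((m.choose r : ℕ)) : Polynomial ℚ) * (EP ab.1 * (X-1) ^ ab.2))) := by
    intro ab hab
    rw [Finset.HasAntidiagonal.mem_antidiagonal] at hab
    have step1 : ∀ cd ∈ Finset.HasAntidiagonal.antidiagonal r,
        MvPowerSeries.coeff (fs ab.1 cd.1) EG2 *
          MvPowerSeries.coeff (fs ab.2 cd.2) (expX1Y (X-1))
        = (ab.1.factorial : ℚ)⁻¹ • ((ab.2.factorial : ℚ)⁻¹ •
            (((ab.1.choose cd.1 : ℕ) : Polynomial ℚ) * ((ab.2.choose cd.2 : ℕ) : Polynomial ℚ)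
              * (EP ab.1 * (X-1) ^ ab.2))) := by
      intro cd _
      rw [hEG, hEX, smul_mul_smul_comm, ← smul_smul]
      congr 1
      congr 1
      ring
    rw [Finset.sum_congr rfl step1, ← Finset.smul_sum, ← Finset.smul_sum, ← Finset.sum_mul]
    congr 2
    have : (∑ cd ∈ Finset.HasAntidiagonal.antidiagonal r,
        ((ab.1.choose cd.1 : ℕ) : Polynomial ℚ) * ((ab.2.choose cd.2 : ℕ) : Polynomial ℚ))
        = (((ab.1 + ab.2).choose r : ℕ) : Polynomial ℚ) := by
      rw [Nat.add_choose_eq]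
      push_cast
      rfl
    rw [this, hab]
  rw [Finset.sum_congr rfl inner, Finset.Nat.sum_antidiagonal_eq_sum_range_succ_mk, hEG]
  rcases Nat.eq_zero_or_pos m with hm | hm
  · subst hm
    rw [Finset.sum_range_one]
    rw [if_congr (fs_eq_zero_iff 0 r) rfl rfl]
    rcases Nat.eq_zero_or_pos r with hr | hr
    · subst hr
      rw [if_pos ⟨rfl, rfl⟩]
      simp only [EP_zero, Nat.choose_self, Nat.factorial_zero, Nat.sub_zero, pow_zero]
      push_cast
      ring_nf
      rw [smul_eq_C_mul, smul_eq_C_mul]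
      simp
      ring
    · rw [if_neg (by omega)]
      rw [Nat.choose_eq_zero_of_lt (by omega)]
      push_cast
      ring_nf
      simp
  · rw [if_neg (by rw [fs_eq_zero_iff]; omega)]
    rw [sub_eq_zero, ← Finset.sum_range_reflect]
    have hre : ∀ j ∈ Finset.range (m+1),
        ((m.factorial : ℚ)⁻¹ • (((m.choose r : ℕ) : Polynomial ℚ)
            * (((m.choose j : ℕ) : Polynomial ℚ) * ((X-1)^j * EP (m-j)))))
        = (((m + 1 - 1 - j).factorial : ℚ)⁻¹ • (((m - (m + 1 - 1 - j)).factorial : ℚ)⁻¹ •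
            ((((m.choose r : ℕ)) : Polynomial ℚ) * (EP (m + 1 - 1 - j) * (X-1) ^ (m - (m + 1 - 1 - j)))))) := by
      intro j hj
      rw [Finset.mem_range] at hj
      have hj' : j ≤ m := by omega
      have h1 : m + 1 - 1 - j = m - j := by omega
      have h2 : m - (m - j) = j := by omega
      rw [h1, h2, natCast_mul_poly (m.choose j), mul_smul_comm, smul_smul,
        mul_comm ((m.factorial : ℚ))⁻¹, smul_smul]
      have hsc : (m.choose j : ℚ) * ((m.factorial : ℚ))⁻¹
          = ((m-j).factorial : ℚ)⁻¹ * ((j.factorial : ℚ))⁻¹ := by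
        rw [mul_comm, factorial_inv_mul_choose hj']
        ring
      rw [hsc, mul_comm ((X-1 : Polynomial ℚ)^j) (EP (m-j))]
    dsimp only
    simp only [Nat.succ_eq_add_one]
    rw [smul_mul_assoc, mul_assoc, mul_comm (EP m) X, EP_rec hm, Finset.mul_sum,
      Finset.smul_sum]
    exact Finset.sum_congr rfl hre

lemma desNum_lt (n : ℕ) (π : Equiv.Perm (Fin n)) : desNum n π < n + 1 := by
  have h1 := Finset.card_filter_le (Finset.range (n-1))
    (fun i => permWord n π (i + 1) < permWord n π i)
  rw [Finset.card_range] at h1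
  rw [desNum]
  omega

lemma count_eq {n j : ℕ} (hn : 1 ≤ n) (hj : 1 ≤ j) :
    (∑ d ∈ Finset.range (n+1),
      ((eulerianFirst (n : ℤ) (d : ℤ) (j : ℤ) : ℕ) : Polynomial ℚ) * X ^ d) = fP n j := by
  have hcard : ∀ d : ℕ, (eulerianFirst (n : ℤ) (d : ℤ) (j : ℤ) : ℕ)
      = (Finset.univ.filter
          (fun π : Equiv.Perm (Fin n) => desNum n π = d ∧ permWord n π 0 = j)).card := by
    intro d
    rw [eulerianFirst, if_pos ⟨by exact_mod_cast hn, by positivity, by exact_mod_cast hj⟩]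
    simp only [Int.toNat_natCast]
    rw [Nat.card_eq_fintype_card, Fintype.card_subtype]
  have hterm : ∀ d ∈ Finset.range (n+1),
      ((eulerianFirst (n : ℤ) (d : ℤ) (j : ℤ) : ℕ) : Polynomial ℚ) * X ^ d
      = ∑ π : Equiv.Perm (Fin n),
          if desNum n π = d ∧ permWord n π 0 = j then X ^ d else 0 := by
    intro d _
    rw [hcard d, Finset.card_filter, Nat.cast_sum, Finset.sum_mul]
    apply Finset.sum_congr rfl
    intro π _
    rw [Nat.cast_ite, ite_mul, Nat.cast_one, one_mul, Nat.cast_zero, zero_mul]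
  rw [Finset.sum_congr rfl hterm, Finset.sum_comm, fP]
  apply Finset.sum_congr rfl
  intro π _
  by_cases hw : permWord n π 0 = j
  · simp only [hw, and_true]
    have : ∀ d ∈ Finset.range (n+1),
        (if desNum n π = d then (X : Polynomial ℚ) ^ d else 0)
        = (if desNum n π = d then X ^ desNum n π else 0) := by
      intro d _
      by_cases hd : desNum n π = d
      · rw [if_pos hd, if_pos hd, hd]
      · rw [if_neg hd, if_neg hd]
    rw [Finset.sum_congr rfl this, Finset.sum_ite_eq (Finset.range (n+1)) (desNum n π)]
    simp [Finset.mem_range.2 (desNum_lt n π)]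
  · rw [if_neg hw]
    apply Finset.sum_eq_zero
    intro d _
    rw [if_neg (by tauto)]

lemma fP_zero_of_gt {n j : ℕ} (h : n < j) : fP n j = 0 := by
  rw [fP]
  apply Finset.sum_eq_zero
  intro π _
  cases n with
  | zero =>
    rw [if_neg]
    unfold permWord
    rw [dif_neg (by omega)]
    omega
  | succ m =>
    rw [if_neg]
    rw [permWord_zero]
    have := (π 0).isLt
    omega

lemma fs_le_iff {n j : ℕ} : fs 1 1 ≤ fs n j ↔ 1 ≤ n ∧ 1 ≤ j := by
  rw [Finsupp.le_def]
  constructor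
  · intro h
    exact ⟨h 0, h 1⟩
  · rintro ⟨h1, h2⟩ x
    fin_cases x
    · exact h1
    · exact h2

lemma fs_sub {n j : ℕ} : fs n j - fs 1 1 = fs (n-1) (j-1) := by
  ext x
  rw [Finsupp.tsub_apply]
  fin_cases x
  · rfl
  · rfl

lemma X0X1 : (MvPowerSeries.X 0 : PS2) * MvPowerSeries.X 1
    = MvPowerSeries.monomial (fs 1 1) 1 := by
  have h : (Finsupp.single (0 : Fin 2) 1) + Finsupp.single (1 : Fin 2) 1 = fs 1 1 := by
    ext x
    fin_cases x <;> simp [Finsupp.single_apply]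
  rw [MvPowerSeries.X, MvPowerSeries.X, MvPowerSeries.monomial_mul_monomial, one_mul, h]

lemma scalar_idB {n j i : ℕ} (hj : 1 ≤ j) (hjn : j ≤ n) (hi : i ≤ j - 1) :
    (((j-1).factorial * (n-j).factorial : ℕ) : ℚ)⁻¹ * ((j-1).choose i : ℚ)
      = ((i.factorial : ℚ))⁻¹ * ((((n-1-i).factorial : ℚ))⁻¹ * ((n-1-i).choose (j-1-i) : ℚ)) := by
  have h1 : ((j-1).factorial : ℚ)⁻¹ * ((j-1).choose i : ℚ)
      = (i.factorial : ℚ)⁻¹ * ((j-1-i).factorial : ℚ)⁻¹ := factorial_inv_mul_choose hi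
  have h2 : ((n-1-i).factorial : ℚ)⁻¹ * ((n-1-i).choose (j-1-i) : ℚ)
      = ((j-1-i).factorial : ℚ)⁻¹ * ((n-1-i-(j-1-i)).factorial : ℚ)⁻¹ :=
    factorial_inv_mul_choose (by omega)
  have h3 : n-1-i-(j-1-i) = n-j := by omega
  rw [h3] at h2
  push_cast
  rw [mul_inv]
  calc ((j-1).factorial : ℚ)⁻¹ * ((n-j).factorial : ℚ)⁻¹ * ((j-1).choose i : ℚ)
      = (((j-1).factorial : ℚ)⁻¹ * ((j-1).choose i : ℚ)) * ((n-j).factorial : ℚ)⁻¹ := by ring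
    _ = ((i.factorial : ℚ)⁻¹ * ((j-1-i).factorial : ℚ)⁻¹) * ((n-j).factorial : ℚ)⁻¹ := by
        rw [h1]
    _ = (i.factorial : ℚ)⁻¹ * (((j-1-i).factorial : ℚ)⁻¹ * ((n-j).factorial : ℚ)⁻¹) := by ring
    _ = _ := by rw [← h2]

lemma idB : AGF = MvPowerSeries.X 0 * MvPowerSeries.X 1 * (expXY (X-1) * EG2) := by
  apply MvPowerSeries.ext
  intro e
  obtain ⟨n, j, rfl⟩ : ∃ n j, e = fs n j := ⟨e 0, e 1, eq_fs e⟩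
  rw [X0X1, MvPowerSeries.coeff_monomial_mul]
  have hA : MvPowerSeries.coeff (fs n j) AGF
      = (((j - 1).factorial * (n - j).factorial : ℕ) : ℚ)⁻¹ •
          ∑ d ∈ Finset.range (n + 1),
            ((eulerianFirst (n : ℤ) (d : ℤ) (j : ℤ) : ℕ) : Polynomial ℚ) * X ^ d := rfl
  by_cases hnj : 1 ≤ n ∧ 1 ≤ j
  · obtain ⟨hn, hj⟩ := hnj
    rw [if_pos (fs_le_iff.2 ⟨hn, hj⟩), one_mul, fs_sub, hA, count_eq hn hj, coeff_mul_fs,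
      Finset.sum_product_right]
    have hXY : ∀ a c : ℕ, MvPowerSeries.coeff (fs a c) (expXY (X-1))
        = if a = c then ((a.factorial : ℚ))⁻¹ • (X-1)^a else 0 := by
      intro a c
      rw [MvPowerSeries.coeff_apply]
      unfold expXY
      simp only [fs_zero, fs_one]
      rfl
    have hEG : ∀ b d : ℕ, MvPowerSeries.coeff (fs b d) EG2
        = ((b.factorial : ℚ))⁻¹ • ((((b.choose d : ℕ)) : Polynomial ℚ) * EP b) :=
      fun b d => rfl
    have inner : ∀ cd ∈ Finset.HasAntidiagonal.antidiagonal (j-1),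
        (∑ ab ∈ Finset.HasAntidiagonal.antidiagonal (n-1),
          MvPowerSeries.coeff (fs ab.1 cd.1) (expXY (X-1)) *
            MvPowerSeries.coeff (fs ab.2 cd.2) EG2)
        = if cd.1 ≤ n-1 then
            ((cd.1.factorial : ℚ))⁻¹ • ((X-1)^cd.1 *
              (((n-1-cd.1).factorial : ℚ)⁻¹ •
                ((((n-1-cd.1).choose cd.2 : ℕ) : Polynomial ℚ) * EP (n-1-cd.1))))
          else 0 := by
      intro cd _
      by_cases hc : cd.1 ≤ n-1
      · rw [if_pos hc]
        rw [Finset.sum_eq_single (cd.1, n-1-cd.1)]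
        · rw [hXY, hEG, if_pos rfl]
          dsimp only
          rw [smul_mul_assoc]
        · intro ab hab hne
          rw [Finset.HasAntidiagonal.mem_antidiagonal] at hab
          rw [hXY, if_neg, zero_mul]
          intro heq
          apply hne
          have : ab.2 = n-1-cd.1 := by omega
          rw [Prod.ext_iff]
          exact ⟨heq, this⟩
        · intro hmem
          exact absurd (Finset.HasAntidiagonal.mem_antidiagonal.2 (by omega)) hmem
      · rw [if_neg hc]
        apply Finset.sum_eq_zero
        intro ab hab
        rw [Finset.HasAntidiagonal.mem_antidiagonal] at hab
        rw [hXY, if_neg (by omega), zero_mul]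
    rw [Finset.sum_congr rfl inner, Finset.Nat.sum_antidiagonal_eq_sum_range_succ_mk]
    rw [show (j-1).succ = j by omega]
    by_cases hjn : j ≤ n
    · rw [fP_closed j hj n hjn, Finset.smul_sum]
      apply Finset.sum_congr rfl
      intro i hi
      rw [Finset.mem_range] at hi
      dsimp only
      rw [if_pos (by omega)]
      rw [natCast_mul_poly, natCast_mul_poly, smul_smul, smul_smul, mul_smul_comm,
        smul_smul, scalar_idB hj hjn (by omega)]
    · rw [fP_zero_of_gt (by omega), smul_zero]
      symm
      apply Finset.sum_eq_zero
      intro i hi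
      rw [Finset.mem_range] at hi
      dsimp only
      by_cases hc : i ≤ n - 1
      · rw [if_pos hc, Nat.choose_eq_zero_of_lt (by omega)]
        simp
      · rw [if_neg hc]
  · rw [if_neg (fun hc => hnj (fs_le_iff.1 hc)), hA]
    have : ∀ d ∈ Finset.range (n + 1),
        ((eulerianFirst (n : ℤ) (d : ℤ) (j : ℤ) : ℕ) : Polynomial ℚ) * X ^ d = 0 := by
      intro d _
      rw [eulerianFirst, if_neg, Nat.cast_zero, zero_mul]
      intro hcond
      exact hnj ⟨by exact_mod_cast hcond.1, by exact_mod_cast hcond.2.2⟩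
    rw [Finset.sum_congr rfl this, Finset.sum_const_zero, smul_zero]

end PSLayer

end AuxProof

/-- `A(t,x,y)·(t·1 - e^{(t-1)x(1+y)}) = (t-1)·xy·e^{(t-1)xy}`. -/
theorem AGF_eq :
    AGF * (MvPowerSeries.C (σ := Fin 2) (R := Polynomial ℚ) Polynomial.X * 1 -
        expX1Y (Polynomial.X - 1)) =
      MvPowerSeries.C (σ := Fin 2) (R := Polynomial ℚ) (Polynomial.X - 1) *
        MvPowerSeries.X 0 * MvPowerSeries.X 1 * expXY (Polynomial.X - 1) := by
  rw [idB]
  have h : MvPowerSeries.X 0 * MvPowerSeries.X 1 * (expXY (Polynomial.X - 1) * EG2) *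
      (MvPowerSeries.C (σ := Fin 2) (R := Polynomial ℚ) Polynomial.X * 1 - expX1Y (Polynomial.X - 1))
      = (EG2 * (MvPowerSeries.C (σ := Fin 2) (R := Polynomial ℚ) Polynomial.X * 1 -
          expX1Y (Polynomial.X - 1))) *
        (MvPowerSeries.X 0 * MvPowerSeries.X 1 * expXY (Polynomial.X - 1)) := by ring
  rw [h, idA]
  ring
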